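/- (Well-defined evaluation) Assume Γ is a static context from a declaration list and μ′ is a store with dom(μ(Γ)) ⊆ dom(μ′). If Γ ⊢ e : t, then the evaluation eval_{Γ,μ′}(e_i) is well-defined (yields a value in 𝕍 ∪ {•}) for every multi-index i ≤ t. -/

import Mathlib

/-- Rounding up to the nearest multiple of `M`. -/
noncomputable def roundUp (M d : ℕ) : ℕ := sInf {m : ℕ | ∃ n : ℕ, m = n * M ∧ d ≤ m}

/-- Tensor types are tuples of naturals. -/
abbrev Ty := List ℕ
/-- Multi-indices. -/
abbrev Index := List ℕ

/-- `IdxLe i t`: the multi-index `i` (with components in {1,2,…}) is bounded by `t`. -/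
def IdxLe (i t : Index) : Prop :=
  i.length = t.length ∧ ∀ l, l < t.length → 1 ≤ i.getD l 0 ∧ i.getD l 0 ≤ t.getD l 0

/-- Swap the `m`-th and `n`-th components (1-based). -/
def swapIdx (t : List ℕ) (m n : ℕ) : List ℕ :=
  (t.set (m-1) (t.getD (n-1) 0)).set (n-1) (t.getD (m-1) 0)

/-- Delete the `m`-th and `n`-th components (1-based, `m < n`). -/
def delete2 (t : List ℕ) (m n : ℕ) : List ℕ :=
  (t.eraseIdx (n-1)).eraseIdx (m-1)

/-- Insert value `l` at the `m`-th and `n`-th positions (1-based, `m < n`). -/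
def insert2 (i : List ℕ) (m n l : ℕ) : List ℕ :=
  (i.insertIdx (m-1) l).insertIdx (n-1) l

/-- Pad a tensor type componentwise. -/
noncomputable def padT (M : ℕ) (t : Ty) : Ty := t.map (roundUp M)

/-- The padding region of a type: indices within the padded bounds but not the original ones. -/
def PadReg (M : ℕ) (t : Ty) (i : Index) : Prop := ¬ IdxLe i t ∧ IdxLe i (padT M t)

inductive Op | add | sub | mul | div
deriving DecidableEq

/-- Expressions of the tensor model language. -/
inductive Expr
| var : String → Expr
| paren : Expr → Expr
| binop : Op → Expr → Expr → Expr
| prod : Expr → Expr → Expr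
| trans : Expr → ℕ → ℕ → Expr
| contr : Expr → ℕ → ℕ → Expr

/-- A static context maps identifiers to tensor types. -/
abbrev Ctx := String → Option Ty

/-- Componentwise padding of a static context. -/
noncomputable def padCtx (M : ℕ) (Γ : Ctx) : Ctx := fun x => (Γ x).map (padT M)

/-- The typing rules of the tensor model language. -/
inductive HasTy (Γ : Ctx) : Expr → Ty → Prop
| var {x t} : Γ x = some t → HasTy Γ (.var x) t
| paren {e t} : HasTy Γ e t → HasTy Γ (.paren e) t
| prod {e₀ e₁ t₀ t₁} : HasTy Γ e₀ t₀ → HasTy Γ e₁ t₁ → HasTy Γ (.prod e₀ e₁) (t₀ ++ t₁)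
| trans {e t m n} : HasTy Γ e t → 1 ≤ m → m < n → n ≤ t.length →
    HasTy Γ (.trans e m n) (swapIdx t m n)
| contr {e t m n} : HasTy Γ e t → 1 ≤ m → m < n → n ≤ t.length →
    t.getD (m-1) 0 = t.getD (n-1) 0 → HasTy Γ (.contr e m n) (delete2 t m n)
| elem {op e₀ e₁ t} : HasTy Γ e₀ t → HasTy Γ e₁ t → HasTy Γ (.binop op e₀ e₁) t
| smul {e₀ e₁ t} : HasTy Γ e₀ [] → HasTy Γ e₁ t → HasTy Γ (.binop .mul e₀ e₁) t
| sdiv {e₀ e₁ t} : HasTy Γ e₀ t → HasTy Γ e₁ [] → HasTy Γ (.binop .div e₀ e₁) t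

/-- Syntax-directed type inference. -/
def inferTy (Γ : Ctx) : Expr → Option Ty
| .var x => Γ x
| .paren e => inferTy Γ e
| .prod e₀ e₁ => do pure ((← inferTy Γ e₀) ++ (← inferTy Γ e₁))
| .trans e m n => do
    let t ← inferTy Γ e
    if 1 ≤ m ∧ m < n ∧ n ≤ t.length then pure (swapIdx t m n) else none
| .contr e m n => do
    let t ← inferTy Γ e
    if 1 ≤ m ∧ m < n ∧ n ≤ t.length ∧ t.getD (m-1) 0 = t.getD (n-1) 0 then
      pure (delete2 t m n) else none
| .binop op e₀ e₁ => do
    let t₀ ← inferTy Γ e₀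
    let t₁ ← inferTy Γ e₁
    if t₀ = t₁ then pure t₀
    else if op = .mul ∧ t₀ = [] then pure t₁
    else if op = .div ∧ t₁ = [] then pure t₀
    else none

/-- The value domain `𝕍 ∪ {•}`: `none` is the undefined value `•`. -/
abbrev W (V : Type) := Option V

/-- Extended addition: `•` is absorbing. -/
def wadd {V : Type} [Add V] : W V → W V → W V
| some a, some b => some (a + b)
| _, _ => none

def wsub {V : Type} [Sub V] : W V → W V → W V
| some a, some b => some (a - b)
| _, _ => none

def wmul {V : Type} [Mul V] : W V → W V → W V
| some a, some b => some (a * b)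
| _, _ => none

/-- Controlled division on `𝕍 ∪ {•}`: `0/0 = 0`, `0/• = 0`, otherwise `•` absorbs
    and division by zero is undefined. -/
def wdiv {V : Type} [Field V] [DecidableEq V] : W V → W V → W V
| some a, some b => if b = 0 then (if a = 0 then some 0 else none) else some (a / b)
| some a, none => if a = 0 then some 0 else none
| none, _ => none

def applyOp {V : Type} [Field V] [DecidableEq V] : Op → W V → W V → W V
| .add => wadd
| .sub => wsub
| .mul => wmul
| .div => wdiv

/-- A dynamic store: a partial map from subscripted identifiers to `𝕍 ∪ {•}`. -/
abbrev Store (V : Type) := String × Index → Option (W V)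

/-- Denotational semantics of expression evaluation; `none` means evaluation is stuck
    (not well-defined), `some w` means the result is the value `w ∈ 𝕍 ∪ {•}`. -/
def eval {V : Type} [Field V] [DecidableEq V] (Γ : Ctx) (μ : Store V) :
    Expr → Index → Option (W V)
| .var x, i => μ (x, i)
| .paren e, i => eval Γ μ e i
| .prod e₀ e₁, i => do
    let t₀ ← inferTy Γ e₀
    let v₀ ← eval Γ μ e₀ (i.take t₀.length)
    let v₁ ← eval Γ μ e₁ (i.drop t₀.length)
    pure (wmul v₀ v₁)
| .trans e m n, i => eval Γ μ e (swapIdx i m n)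
| .contr e m n, i => do
    let t ← inferTy Γ e
    let vs ← (List.range (t.getD (m-1) 0)).mapM (fun l => eval Γ μ e (insert2 i m n (l+1)))
    pure (vs.foldl wadd (some 0))
| .binop op e₀ e₁, i => do
    let t₀ ← inferTy Γ e₀
    let t₁ ← inferTy Γ e₁
    if op = .mul ∧ t₀ = [] then
      let v₀ ← eval Γ μ e₀ []
      let v₁ ← eval Γ μ e₁ i
      pure (wmul v₀ v₁)
    else if op = .div ∧ t₁ = [] then
      let v₀ ← eval Γ μ e₀ i
      let v₁ ← eval Γ μ e₁ []
      pure (wdiv v₀ v₁)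
    else
      let v₀ ← eval Γ μ e₀ i
      let v₁ ← eval Γ μ e₁ i
      pure (applyOp op v₀ v₁)

open Classical

/-- The unique initial store determined by `Γ` and the ambient values `v`. -/
noncomputable def initStore {V : Type} (Γ : Ctx) (v : String → Index → W V) : Store V :=
  fun p => match Γ p.1 with
  | some t => if IdxLe p.2 t then some (v p.1 p.2) else none
  | none => none

/-- The unique padded initial store: values on the original domain, zero on padding. -/
noncomputable def initStoreP {V : Type} [Zero V] (M : ℕ) (Γ : Ctx)
    (v : String → Index → W V) : Store V :=
  fun p => match Γ p.1 with
  | some t =>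
      if IdxLe p.2 t then some (v p.1 p.2)
      else if IdxLe p.2 (padT M t) then some (some 0)
      else none
  | none => none

/-- A statement `x = e`. -/
abbrev Stmt := String × Expr

/-- Well-formedness of a statement list in context `Γ`. -/
def Ok (Γ : Ctx) (ss : List Stmt) : Prop :=
  ∀ s ∈ ss, ∃ t, Γ s.1 = some t ∧ HasTy Γ s.2 t

/-- Evaluation of a single assignment statement (rule ev-stmt). -/
inductive StepStmt {V : Type} [Field V] [DecidableEq V] (Γ : Ctx) :
    Store V → Stmt → Store V → Prop
| mk {μ : Store V} {x e t} :
    Γ x = some t →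
    (∀ i, IdxLe i t → μ (x, i) ≠ none) →
    (∀ i, IdxLe i t → (eval Γ μ e i).isSome) →
    StepStmt Γ μ (x, e)
      (fun p => if p.1 = x ∧ IdxLe p.2 t then eval Γ μ e p.2 else μ p)

/-- Evaluation of a statement sequence. -/
inductive StepStmts {V : Type} [Field V] [DecidableEq V] (Γ : Ctx) :
    Store V → List Stmt → Store V → Prop
| nil {μ} : StepStmts Γ μ [] μ
| cons {μ μ' μ'' s ss} : StepStmt Γ μ s μ' → StepStmts Γ μ' ss μ'' →
    StepStmts Γ μ (s :: ss) μ''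

/-- Evaluation of a single assignment statement with a padded store (rule ev-pad-stmt). -/
inductive StepStmtP {V : Type} [Field V] [DecidableEq V] (M : ℕ) (Γ : Ctx) :
    Store V → Stmt → Store V → Prop
| mk {μ : Store V} {x e t} :
    Γ x = some t →
    (∀ i, IdxLe i (padT M t) → μ (x, i) ≠ none) →
    (∀ i, IdxLe i (padT M t) → (eval (padCtx M Γ) μ e i).isSome) →
    StepStmtP M Γ μ (x, e)
      (fun p => if p.1 = x ∧ IdxLe p.2 (padT M t) then eval (padCtx M Γ) μ e p.2 else μ p)

inductive StepStmtsP {V : Type} [Field V] [DecidableEq V] (M : ℕ) (Γ : Ctx) :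
    Store V → List Stmt → Store V → Prop
| nil {μ} : StepStmtsP M Γ μ [] μ
| cons {μ μ' μ'' s ss} : StepStmtP M Γ μ s μ' → StepStmtsP M Γ μ' ss μ'' →
    StepStmtsP M Γ μ (s :: ss) μ''

section Helpers

lemma IdxLe_nil : IdxLe [] [] := ⟨rfl, fun l hl => by simp at hl⟩

lemma IdxLe_nil_eq {i : Index} (h : IdxLe i []) : i = [] :=
  List.eq_nil_of_length_eq_zero h.1

lemma inferTy_of_hasTy {Γ : Ctx} {e t} (h : HasTy Γ e t) : inferTy Γ e = some t := by
  induction h with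
  | var h => simpa [inferTy]
  | paren _ ih => simpa [inferTy]
  | prod _ _ ih₀ ih₁ => simp [inferTy, ih₀, ih₁]
  | trans _ h1 h2 h3 ih => simp [inferTy, ih, h1, h2, h3]
  | contr _ h1 h2 h3 h4 ih =>
    simp only [List.getD_eq_getElem?_getD] at h4
    simp [inferTy, ih, h1, h2, h3, h4]
  | elem _ _ ih₀ ih₁ => simp [inferTy, ih₀, ih₁]
  | @smul e₀ e₁ t _ _ ih₀ ih₁ => by_cases ht : t = [] <;> simp [inferTy, ih₀, ih₁, ht]
  | @sdiv e₀ e₁ t _ _ ih₀ ih₁ => by_cases ht : t = [] <;> simp [inferTy, ih₀, ih₁, ht]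

lemma IdxLe_take_drop {i : Index} {t₀ t₁ : Ty} (h : IdxLe i (t₀ ++ t₁)) :
    IdxLe (i.take t₀.length) t₀ ∧ IdxLe (i.drop t₀.length) t₁ := by
  obtain ⟨hlen, hb⟩ := h
  simp only [List.length_append] at hlen
  refine ⟨⟨by simp [hlen], fun l hl => ?_⟩, ⟨by simp [hlen], fun l hl => ?_⟩⟩
  · have := hb l (by simp; omega)
    simpa [List.getD_eq_getElem?_getD, List.getElem?_take, hl,
      List.getElem?_append_left (by omega : l < t₀.length)] using this
  · have := hb (t₀.length + l) (by simp; omega)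
    simpa [List.getD_eq_getElem?_getD, List.getElem?_drop,
      List.getElem?_append_right (by omega : t₀.length ≤ t₀.length + l)] using this

lemma length_swapIdx (t : List ℕ) (m n : ℕ) : (swapIdx t m n).length = t.length := by
  simp [swapIdx]

lemma swapIdx_getD (t : List ℕ) {m n : ℕ} (hm : 1 ≤ m) (hmn : m < n) (hn : n ≤ t.length)
    {l : ℕ} (hl : l < t.length) :
    (swapIdx t m n).getD l 0 =
      if l = n-1 then t.getD (m-1) 0 else if l = m-1 then t.getD (n-1) 0
      else t.getD l 0 := by
  have hne : n - 1 ≠ m - 1 := by omega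
  unfold swapIdx
  rcases eq_or_ne l (n-1) with rfl | h1
  · rw [if_pos rfl, List.getD_eq_getElem?_getD,
      List.getElem?_set_self (by simpa using (by omega : n - 1 < t.length))]
    simp [List.getD_eq_getElem?_getD]
  · rw [if_neg h1, List.getD_eq_getElem?_getD, List.getElem?_set_ne (Ne.symm h1)]
    rcases eq_or_ne l (m-1) with rfl | h2
    · rw [if_pos rfl, List.getElem?_set_self (by omega)]
      simp [List.getD_eq_getElem?_getD]
    · rw [if_neg h2, List.getElem?_set_ne (Ne.symm h2), List.getD_eq_getElem?_getD]

lemma IdxLe_swap {i t : List ℕ} {m n : ℕ} (hm : 1 ≤ m) (hmn : m < n) (hn : n ≤ t.length)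
    (h : IdxLe i (swapIdx t m n)) : IdxLe (swapIdx i m n) t := by
  obtain ⟨hlen, hb⟩ := h
  rw [length_swapIdx] at hlen hb
  have hni : n ≤ i.length := hlen ▸ hn
  refine ⟨by rw [length_swapIdx, hlen], fun l hl => ?_⟩
  rw [swapIdx_getD i hm hmn hni (hlen ▸ hl)]
  split_ifs with h1 h2
  · have := hb (m-1) (by omega)
    rwa [swapIdx_getD t hm hmn hn (by omega), if_neg (by omega), if_pos rfl, ← h1] at this
  · have := hb (n-1) (by omega)
    rwa [swapIdx_getD t hm hmn hn (by omega), if_pos rfl, ← h2] at this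
  · have := hb l hl
    rwa [swapIdx_getD t hm hmn hn hl, if_neg h1, if_neg h2] at this

lemma getElem?_insertIdx {α : Type*} (l : List α) (x : α) (n k : ℕ) (hn : n ≤ l.length) :
    (l.insertIdx n x)[k]? = if k < n then l[k]? else if k = n then some x else l[k-1]? := by
  induction n generalizing l k with
  | zero =>
    simp only [List.insertIdx_zero]
    cases k <;> simp
  | succ n ih =>
    cases l with
    | nil => simp at hn
    | cons a l' =>
      rw [List.insertIdx_succ_cons]
      cases k with
      | zero => simp
      | succ k =>
        simp only [List.getElem?_cons_succ]
        rw [ih l' k (by simpa using hn)]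
        split_ifs with h1 h2 <;> try (first | rfl | omega)
        · simp only [Nat.succ_sub_one]
          cases k with
          | zero => omega
          | succ k' => simp
end Helpers
lemma length_delete2 {t : List ℕ} {m n : ℕ} (hm : 1 ≤ m) (hmn : m < n) (hn : n ≤ t.length) :
    (delete2 t m n).length = t.length - 2 := by
  have h1 : (t.eraseIdx (n-1)).length = t.length - 1 := by
    rw [List.length_eraseIdx, if_pos (by omega)]
  simp only [delete2, List.length_eraseIdx, h1, if_pos (show m - 1 < t.length - 1 by omega)]
  omega

lemma delete2_getElem? {t : List ℕ} {m n : ℕ} (hm : 1 ≤ m) (hmn : m < n) (k : ℕ) :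
    (delete2 t m n)[k]? = if k < m - 1 then t[k]? else if k + 1 < n - 1 then t[k+1]? else t[k+2]? := by
  simp only [delete2, List.getElem?_eraseIdx]
  split_ifs <;> (first | rfl | omega)

lemma IdxLe_insert2 {i t : List ℕ} {m n v : ℕ} (hm : 1 ≤ m) (hmn : m < n)
    (hn : n ≤ t.length) (hv1 : 1 ≤ v) (hvm : v ≤ t.getD (m-1) 0)
    (hveq : t.getD (m-1) 0 = t.getD (n-1) 0)
    (h : IdxLe i (delete2 t m n)) : IdxLe (insert2 i m n v) t := by
  obtain ⟨hlen, hb⟩ := h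
  rw [length_delete2 hm hmn hn] at hlen hb
  have hm1 : m - 1 ≤ i.length := by omega
  have hlen1 : (i.insertIdx (m-1) v).length = i.length + 1 :=
    by rw [List.length_insertIdx, if_pos hm1]
  have hn1 : n - 1 ≤ (i.insertIdx (m-1) v).length := by omega
  have hlen2 : (insert2 i m n v).length = t.length := by
    simp only [insert2]
    rw [List.length_insertIdx, if_pos hn1, hlen1]; omega
  refine ⟨hlen2, fun l hl => ?_⟩
  have key : (insert2 i m n v)[l]? =
      if l < n - 1 then (if l < m - 1 then i[l]? else if l = m - 1 then some v else i[l-1]?)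
      else if l = n - 1 then some v
      else (if l - 1 < m - 1 then i[l-1]? else if l - 1 = m - 1 then some v else i[l-1-1]?) := by
    simp only [insert2]
    rw [getElem?_insertIdx _ _ _ l hn1, getElem?_insertIdx i v _ l hm1,
      getElem?_insertIdx i v _ (l-1) hm1]
  have hbg : ∀ k, k < t.length - 2 →
      1 ≤ i[k]?.getD 0 ∧ i[k]?.getD 0 ≤ (delete2 t m n)[k]?.getD 0 := by
    intro k hk
    have := hb k hk
    simpa [List.getD_eq_getElem?_getD] using this
  simp only [List.getD_eq_getElem?_getD] at hvm hveq ⊢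
  rw [key]
  rcases lt_trichotomy l (n-1) with h1 | rfl | h1
  · rw [if_pos h1]
    rcases lt_trichotomy l (m-1) with h2 | rfl | h2
    · rw [if_pos h2]
      have := hbg l (by omega)
      rwa [delete2_getElem? hm hmn, if_pos h2] at this
    · rw [if_neg (lt_irrefl _), if_pos rfl]
      simp only [Option.getD_some]
      exact ⟨hv1, hvm⟩
    · rw [if_neg (by omega), if_neg (by omega)]
      have := hbg (l-1) (by omega)
      rwa [delete2_getElem? hm hmn, if_neg (by omega), if_pos (by omega),
        (by omega : l - 1 + 1 = l)] at this
  · rw [if_neg (lt_irrefl _), if_pos rfl]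
    simp only [Option.getD_some]
    exact ⟨hv1, hveq ▸ hvm⟩
  · rw [if_neg (by omega), if_neg (by omega), if_neg (by omega), if_neg (by omega)]
    have := hbg (l-1-1) (by omega)
    rwa [delete2_getElem? hm hmn, if_neg (by omega), if_neg (by omega),
      (by omega : l - 1 - 1 + 2 = l)] at this

lemma mapM_isSome {α β : Type} {f : α → Option β} {l : List α}
    (h : ∀ a ∈ l, (f a).isSome) : (l.mapM f).isSome := by
  induction l with
  | nil => rfl
  | cons a l ih =>
    obtain ⟨b, hb⟩ := Option.isSome_iff_exists.mp (h a (by simp))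
    obtain ⟨bs, hbs⟩ := Option.isSome_iff_exists.mp (ih (fun a ha => h a (by simp [ha])))
    have : (a :: l).mapM f = some (b :: bs) := by
      rw [List.mapM_cons, hb, hbs]; rfl
    rw [this]; rfl
/-- **Well-defined evaluation**: if the store `μ'` contains the domain of the unique
initial store `μ(Γ)` and `Γ ⊢ e : t`, then `eval_{Γ,μ'}(e_i)` is well-defined
(yields a value in `𝕍 ∪ {•}`) for every multi-index `i ≤ t`. -/
theorem eval_wellDefined (V : Type) [Field V] [DecidableEq V] (Γ : Ctx)
    (μ' : Store V)
    (hdom : ∀ x t, Γ x = some t → ∀ i, IdxLe i t → μ' (x, i) ≠ none)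
    {e : Expr} {t : Ty} (h : HasTy Γ e t) :
    ∀ i, IdxLe i t → (eval Γ μ' e i).isSome := by
  induction h with
  | @var x t hx =>
    intro i hi
    rw [Option.isSome_iff_ne_none]
    exact hdom x t hx i hi
  | paren _ ih =>
    intro i hi
    simpa [eval] using ih i hi
  | @prod e₀ e₁ t₀ t₁ h₀ h₁ ih₀ ih₁ =>
    intro i hi
    obtain ⟨hi₀, hi₁⟩ := IdxLe_take_drop hi
    obtain ⟨v₀, hv₀⟩ := Option.isSome_iff_exists.mp (ih₀ _ hi₀)
    obtain ⟨v₁, hv₁⟩ := Option.isSome_iff_exists.mp (ih₁ _ hi₁)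
    simp [eval, inferTy_of_hasTy h₀, hv₀, hv₁]
  | @trans e t m n h₀ h1 h2 h3 ih =>
    intro i hi
    simpa [eval] using ih _ (IdxLe_swap h1 h2 h3 hi)
  | @contr e t m n h₀ h1 h2 h3 h4 ih =>
    intro i hi
    have hmap : ((List.range (t.getD (m-1) 0)).mapM
        (fun l => eval Γ μ' e (insert2 i m n (l+1)))).isSome := by
      apply mapM_isSome
      intro a ha
      rw [List.mem_range] at ha
      exact ih _ (IdxLe_insert2 h1 h2 h3 (by omega) (by omega) h4 hi)
    obtain ⟨vs, hvs⟩ := Option.isSome_iff_exists.mp hmap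
    simp only [eval, inferTy_of_hasTy h₀, Option.bind_eq_bind, Option.bind_some, hvs]
    rfl
  | @elem op e₀ e₁ t h₀ h₁ ih₀ ih₁ =>
    intro i hi
    by_cases hc1 : op = .mul ∧ t = []
    · obtain rfl : i = [] := IdxLe_nil_eq (hc1.2 ▸ hi)
      obtain ⟨v₀, hv₀⟩ := Option.isSome_iff_exists.mp (ih₀ _ hi)
      obtain ⟨v₁, hv₁⟩ := Option.isSome_iff_exists.mp (ih₁ _ hi)
      simp [eval, inferTy_of_hasTy h₀, inferTy_of_hasTy h₁, hc1.1, hc1.2, hv₀, hv₁]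
    · by_cases hc2 : op = .div ∧ t = []
      · obtain rfl : i = [] := IdxLe_nil_eq (hc2.2 ▸ hi)
        obtain ⟨v₀, hv₀⟩ := Option.isSome_iff_exists.mp (ih₀ _ hi)
        obtain ⟨v₁, hv₁⟩ := Option.isSome_iff_exists.mp (ih₁ _ hi)
        simp [eval, inferTy_of_hasTy h₀, inferTy_of_hasTy h₁, hc1, hc2.1, hc2.2, hv₀, hv₁]
      · obtain ⟨v₀, hv₀⟩ := Option.isSome_iff_exists.mp (ih₀ _ hi)
        obtain ⟨v₁, hv₁⟩ := Option.isSome_iff_exists.mp (ih₁ _ hi)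
        simp [eval, inferTy_of_hasTy h₀, inferTy_of_hasTy h₁, hc1, hc2, hv₀, hv₁]
  | @smul e₀ e₁ t h₀ h₁ ih₀ ih₁ =>
    intro i hi
    obtain ⟨v₀, hv₀⟩ := Option.isSome_iff_exists.mp (ih₀ [] IdxLe_nil)
    obtain ⟨v₁, hv₁⟩ := Option.isSome_iff_exists.mp (ih₁ i hi)
    simp [eval, inferTy_of_hasTy h₀, inferTy_of_hasTy h₁, hv₀, hv₁]
  | @sdiv e₀ e₁ t h₀ h₁ ih₀ ih₁ =>
    intro i hi
    obtain ⟨v₀, hv₀⟩ := Option.isSome_iff_exists.mp (ih₀ i hi)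
    obtain ⟨v₁, hv₁⟩ := Option.isSome_iff_exists.mp (ih₁ [] IdxLe_nil)
    simp [eval, inferTy_of_hasTy h₀, inferTy_of_hasTy h₁, hv₀, hv₁]
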